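/- Let w ∈ ℝ³, let θ ∈ ℝ³ with ‖θ‖ = 1, set b = √(1+‖w‖²), f = b + θ^T w, A = I − f^{-1}(θ + (b+1)^{-1}w)w^T, and let R be a 3×3 matrix with R^T R = I. Then for every v ∈ ℝ³ with θ^T v = 0 one has ‖R A v‖ = ‖v‖; that is, RA acts isometrically on the tangent plane to the unit sphere at θ. -/

import Mathlib

open Matrix

/-- `b = √(1+‖w‖²)`. -/
noncomputable def bOf (w : Fin 3 → ℝ) : ℝ := Real.sqrt (1 + w ⬝ᵥ w)

/-- `f = b + θᵀw`. -/
noncomputable def fOf (θ w : Fin 3 → ℝ) : ℝ := bOf w + θ ⬝ᵥ w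

/-- `A = I − f⁻¹ (θ + (b+1)⁻¹ w) wᵀ`. -/
noncomputable def AOf (θ w : Fin 3 → ℝ) : Matrix (Fin 3) (Fin 3) ℝ :=
  1 - (fOf θ w)⁻¹ • vecMulVec (θ + (bOf w + 1)⁻¹ • w) w

lemma vecMulVec_mulVec' (x y v : Fin 3 → ℝ) :
    vecMulVec x y *ᵥ v = (y ⬝ᵥ v) • x := by
  funext i
  simp [vecMulVec_apply, mulVec, dotProduct, Finset.sum_mul, Finset.mul_sum]
  ring_nf

lemma dot_self_nonneg (x : Fin 3 → ℝ) : 0 ≤ x ⬝ᵥ x :=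
  Finset.sum_nonneg fun i _ => mul_self_nonneg _

/-- for `R` orthogonal, `RA` acts isometrically on the tangent
plane to the unit sphere at `θ`: if `θᵀv = 0` then `‖RAv‖ = ‖v‖`. -/
theorem RA_isometric_on_tangent (w θ : Fin 3 → ℝ) (hθ : Real.sqrt (θ ⬝ᵥ θ) = 1)
    (R : Matrix (Fin 3) (Fin 3) ℝ) (hR : Rᵀ * R = 1)
    (v : Fin 3 → ℝ) (hv : θ ⬝ᵥ v = 0) :
    Real.sqrt ((R *ᵥ (AOf θ w *ᵥ v)) ⬝ᵥ (R *ᵥ (AOf θ w *ᵥ v)))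
      = Real.sqrt (v ⬝ᵥ v) := by
  have hθθ : θ ⬝ᵥ θ = 1 := by rwa [Real.sqrt_eq_one] at hθ
  -- R orthogonal
  have hRx : ∀ x : Fin 3 → ℝ, (R *ᵥ x) ⬝ᵥ (R *ᵥ x) = x ⬝ᵥ x := by
    intro x
    rw [dotProduct_mulVec, ← mulVec_transpose, mulVec_mulVec, hR, one_mulVec]
  rw [hRx]
  -- scalar setup
  set n := w ⬝ᵥ w with hn
  set c := θ ⬝ᵥ w with hc
  set s := w ⬝ᵥ v with hs
  have hn0 : 0 ≤ n := dot_self_nonneg w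
  set b := bOf w with hbdef
  have hb2 : b ^ 2 = 1 + n := Real.sq_sqrt (by linarith)
  have hb1 : 1 ≤ b := by
    rw [hbdef, bOf]
    have h := Real.sqrt_le_sqrt (show (1:ℝ) ≤ 1 + w ⬝ᵥ w by linarith)
    simpa using h
  have hcs : c ^ 2 ≤ n := by
    have := Finset.sum_mul_sq_le_sq_mul_sq Finset.univ θ w
    have h1 : ∑ i, θ i ^ 2 = 1 := by
      simpa [dotProduct, sq] using hθθ
    have h2 : ∑ i, w i ^ 2 = n := by simp [hn, dotProduct, sq]
    calc c ^ 2 = (∑ i, θ i * w i) ^ 2 := by rw [hc]; rfl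
    _ ≤ (∑ i, θ i ^ 2) * ∑ i, w i ^ 2 := this
    _ = n := by rw [h1, h2, one_mul]
  have hf : fOf θ w = b + c := by rw [fOf, hbdef, hc]
  have hfpos : 0 < b + c := by nlinarith
  have hf0 : fOf θ w ≠ 0 := by rw [hf]; exact ne_of_gt hfpos
  have hb1' : b + 1 ≠ 0 := by linarith
  -- expand Av
  have hAv : AOf θ w *ᵥ v
      = v - ((fOf θ w)⁻¹ * s) • (θ + (bOf w + 1)⁻¹ • w) := by
    rw [AOf, sub_mulVec, one_mulVec, smul_mulVec, vecMulVec_mulVec', ← hs,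
      smul_smul]

  rw [hAv]
  congr 1
  have hvθ : v ⬝ᵥ θ = 0 := by rwa [dotProduct_comm]
  have hwθ : w ⬝ᵥ θ = c := by rw [dotProduct_comm]
  have hvw : v ⬝ᵥ w = s := by rw [dotProduct_comm]
  simp only [dotProduct_sub, sub_dotProduct, dotProduct_add, add_dotProduct,
    dotProduct_smul, smul_dotProduct, smul_eq_mul, hf, ← hbdef, hvθ, hwθ, hvw, hv,
    hθθ, ← hn, ← hs, ← hc]
  have hbc : (b+c) ≠ 0 := ne_of_gt hfpos
  set t := v ⬝ᵥ v with ht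
  clear_value b c n s t
  rw [show n = b^2 - 1 by linarith]
  field_simp
  ring
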